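/- arXiv:1812.05125 — 2 statements merged into one kernel-verified Lean document; each statement's English description precedes it below -/
import Mathlib

section
/- Let G be a connected graph for which every minimum vertex cover induces a connected subgraph. If every vertex of G lies in some minimum vertex cover, then evc(G) = mvc(G); otherwise evc(G) = mvc(G) + 1. -/
namespace EVC

open SimpleGraph

variable {V : Type*}

/-- `S` is a vertex cover of `G`. -/
def IsVC (G : SimpleGraph V) (S : Set V) : Prop :=
  ∀ ⦃u v : V⦄, G.Adj u v → u ∈ S ∨ v ∈ S

/-- The minimum vertex cover number of `G`. -/
noncomputable def mvc (G : SimpleGraph V) : ℕ :=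
  sInf {k | ∃ S : Set V, IsVC G S ∧ S.ncard = k}

/-- The minimum size of a vertex cover of `G` containing all vertices of `U`. -/
noncomputable def mvcOn (G : SimpleGraph V) (U : Set V) : ℕ :=
  sInf {k | ∃ S : Set V, IsVC G S ∧ U ⊆ S ∧ S.ncard = k}

/-- Configuration `S'` is obtained from configuration `S` by a legal move of the guards
defending an attack on the edge `uv`: each guard stays or moves to an adjacent vertex
(at most one guard per vertex), and some guard moves across the attacked edge `uv`. -/
def Defends (G : SimpleGraph V) (S S' : Set V) (u v : V) : Prop :=
  ∃ f : V → V, Set.BijOn f S S' ∧ (∀ w ∈ S, f w = w ∨ G.Adj w (f w)) ∧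
    ((u ∈ S ∧ f u = v) ∨ (v ∈ S ∧ f v = u))

/-- `C` is an eternal vertex cover class of `G` with `k` guards, each configuration being a
vertex cover of size `k` containing `U`: from each configuration, every attack on an edge
can be defended by a legal move to another configuration in `C`. -/
def IsEvcClassOn (G : SimpleGraph V) (U : Set V) (k : ℕ) (C : Set (Set V)) : Prop :=
  C.Nonempty ∧ (∀ S ∈ C, IsVC G S ∧ U ⊆ S ∧ S.ncard = k) ∧
    ∀ S ∈ C, ∀ u v : V, G.Adj u v → ∃ S' ∈ C, Defends G S S' u v

/-- An eternal vertex cover class with no constraint on occupied vertices. -/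
def IsEvcClass (G : SimpleGraph V) (k : ℕ) (C : Set (Set V)) : Prop :=
  IsEvcClassOn G ∅ k C

/-- `evc_U(G)` : the minimum `k` admitting an eternal vertex cover class all of whose
configurations contain `U`. -/
noncomputable def evcOn (G : SimpleGraph V) (U : Set V) : ℕ :=
  sInf {k | ∃ C : Set (Set V), IsEvcClassOn G U k C}

/-- The eternal vertex cover number of `G`. -/
noncomputable def evc (G : SimpleGraph V) : ℕ := evcOn G ∅

/-- `x` is a cut vertex of the connected graph `G`. -/
def IsCutVertex (G : SimpleGraph V) (x : V) : Prop :=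
  G.Connected ∧ ¬ (G.induce {v : V | v ≠ x}).Connected

/-- The set of cut vertices of `G`. -/
def cutVertices (G : SimpleGraph V) : Set V := {x | IsCutVertex G x}

/-- `G` is locally connected: every open neighborhood induces a connected subgraph. -/
def LocallyConnected (G : SimpleGraph V) : Prop :=
  ∀ v : V, (G.induce (G.neighborSet v)).Connected

end EVC

open EVC SimpleGraph

section Helpers
set_option linter.unusedSectionVars false
variable {V : Type*} [Finite V] {G : SimpleGraph V}

def nbr (G : SimpleGraph V) (A : Set V) : Set V := {b | ∃ a ∈ A, G.Adj a b}

lemma isVC_univ (G : SimpleGraph V) : IsVC G Set.univ := fun _ _ _ => Or.inl trivial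

lemma mvc_spec (G : SimpleGraph V) : ∃ S : Set V, IsVC G S ∧ S.ncard = mvc G := by
  have h : {k | ∃ S : Set V, IsVC G S ∧ S.ncard = k}.Nonempty :=
    ⟨(Set.univ : Set V).ncard, Set.univ, isVC_univ G, rfl⟩
  exact Nat.sInf_mem h

lemma mvc_le {S : Set V} (hS : IsVC G S) : mvc G ≤ S.ncard :=
  Nat.sInf_le ⟨S, hS, rfl⟩

lemma no_closed {S A : Set V} (hScon : (G.induce S).Connected) (hAS : A ⊆ S)
    {a b : V} (ha : a ∈ A) (hb : b ∈ S) (hbA : b ∉ A)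
    (hcl : ∀ p ∈ A, ∀ q ∈ S, G.Adj p q → q ∈ A) : False := by
  obtain ⟨p⟩ := hScon.preconnected ⟨a, hAS ha⟩ ⟨b, hb⟩
  suffices h : ∀ (x y : ↥S) (_ : (G.induce S).Walk x y), (x : V) ∈ A → (y : V) ∈ A by
    exact hbA (h _ _ p ha)
  intro x y p hx
  induction p with
  | nil => exact hx
  | cons h q ih => exact ih (hcl _ hx _ (Subtype.coe_prop _) h)

lemma defends_comm {S S' : Set V} {u v : V} (h : Defends G S S' u v) : Defends G S S' v u := by
  obtain ⟨f, h1, h2, h3⟩ := h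
  exact ⟨f, h1, h2, h3.symm⟩

lemma defends_swap {S : Set V} {u v : V} (hu : u ∈ S) (hv : v ∈ S) (hadj : G.Adj u v) :
    Defends G S S u v := by
  classical
  have hmaps : Set.MapsTo (Equiv.swap u v) S S := by
    intro w hw
    rcases eq_or_ne w u with rfl | h1
    · simpa [Equiv.swap_apply_left] using hv
    rcases eq_or_ne w v with rfl | h2
    · simpa [Equiv.swap_apply_right] using hu
    · simpa [Equiv.swap_apply_of_ne_of_ne h1 h2] using hw
  refine ⟨Equiv.swap u v, ⟨hmaps, (Equiv.injective _).injOn, ?_⟩, ?_,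
    Or.inl ⟨hu, Equiv.swap_apply_left u v⟩⟩
  · intro w hw
    exact ⟨Equiv.swap u v w, hmaps hw, by simp⟩
  · intro w hw
    rcases eq_or_ne w u with rfl | h1
    · rw [Equiv.swap_apply_left]; exact Or.inr hadj
    rcases eq_or_ne w v with rfl | h2
    · rw [Equiv.swap_apply_right]; exact Or.inr hadj.symm
    · exact Or.inl (Equiv.swap_apply_of_ne_of_ne h1 h2)


lemma hall_defends {S T : Set V} {u v : V} (hcard : S.ncard = T.ncard)
    (hv : v ∈ S) (hu : u ∈ T) (huS : u ∉ S) (hadj : G.Adj u v)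
    (hall : ∀ A : Set V, A ⊆ S \ {v} →
      A.ncard ≤ ((A ∪ nbr G A) ∩ (T \ {u})).ncard) :
    Defends G S T u v := by
  classical
  have : Fintype V := Fintype.ofFinite V
  set t : ↥(S \ {v}) → Finset V := fun w =>
    {y ∈ (T \ {u}).toFinset | y = ↑w ∨ G.Adj ↑w y} with ht
  have hhall : ∀ s : Finset ↥(S \ {v}), s.card ≤ (s.biUnion t).card := by
    intro s
    set A : Set V := Subtype.val '' (↑s : Set ↥(S \ {v})) with hA
    have hAsub : A ⊆ S \ {v} := by
      rintro a ⟨w, _, rfl⟩; exact w.2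
    have h1 : s.card = A.ncard := by
      rw [hA, Set.ncard_image_of_injective _ Subtype.val_injective,
        Set.ncard_coe_finset]
    have h2 : ((↑(s.biUnion t) : Set V)) = (A ∪ nbr G A) ∩ (T \ {u}) := by
      ext y
      simp only [Finset.coe_biUnion, Finset.mem_coe, Set.mem_iUnion, ht,
        Finset.mem_filter, Set.mem_toFinset, Set.mem_inter_iff, Set.mem_union,
        nbr, Set.mem_setOf_eq, hA, Set.mem_image]
      constructor
      · rintro ⟨w, hw, hyT, h | h⟩
        · exact ⟨Or.inl ⟨w, hw, h.symm⟩, hyT⟩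
        · exact ⟨Or.inr ⟨w, ⟨w, hw, rfl⟩, h⟩, hyT⟩
      · rintro ⟨h | ⟨a, ⟨w, hw, rfl⟩, h⟩, hyT⟩
        · obtain ⟨w, hw, rfl⟩ := h
          exact ⟨w, hw, hyT, Or.inl rfl⟩
        · exact ⟨w, hw, hyT, Or.inr h⟩
    have h3 : (s.biUnion t).card = ((A ∪ nbr G A) ∩ (T \ {u})).ncard := by
      rw [← h2, Set.ncard_coe_finset]
    rw [h1, h3]
    exact hall A hAsub
  obtain ⟨f, hfinj, hft⟩ :=
    (Finset.all_card_le_biUnion_card_iff_existsInjective' t).mp hhall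
  have hft' : ∀ x : ↥(S \ {v}), f x ∈ T \ {u} ∧ (f x = ↑x ∨ G.Adj ↑x (f x)) := by
    intro x
    have := hft x
    rw [ht] at this
    simp only [Finset.mem_filter, Set.mem_toFinset] at this
    exact this
  set F : V → V := fun w => if h : w ∈ S \ {v} then f ⟨w, h⟩ else if w = v then u else w
    with hF
  have hFv : F v = u := by
    rw [hF]; simp
  have hFw : ∀ w (h : w ∈ S \ {v}), F w = f ⟨w, h⟩ := by
    intro w h; rw [hF]; simp [h]
  have hmaps : Set.MapsTo F S T := by
    intro w hw
    rcases eq_or_ne w v with rfl | hne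
    · rw [hFv]; exact hu
    · rw [hFw w ⟨hw, hne⟩]; exact (hft' _).1.1
  have hinj : Set.InjOn F S := by
    intro w1 h1 w2 h2 heq
    by_cases hne1 : w1 = v
    · by_cases hne2 : w2 = v
      · rw [hne1, hne2]
      · rw [hne1, hFv, hFw w2 ⟨h2, hne2⟩] at heq
        rw [hne1]
        exact absurd heq.symm (hft' ⟨w2, h2, hne2⟩).1.2
    · by_cases hne2 : w2 = v
      · rw [hne2, hFv, hFw w1 ⟨h1, hne1⟩] at heq
        rw [hne2]
        exact absurd heq (hft' ⟨w1, h1, hne1⟩).1.2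
      · rw [hFw w1 ⟨h1, hne1⟩, hFw w2 ⟨h2, hne2⟩] at heq
        exact Subtype.ext_iff.mp (hfinj heq)
  have himg : F '' S = T := by
    apply Set.eq_of_subset_of_ncard_le (Set.image_subset_iff.mpr hmaps)
    rw [Set.ncard_image_of_injOn hinj]
    exact hcard.ge
  refine ⟨F, ⟨hmaps, hinj, himg.ge⟩, ?_, Or.inr ⟨hv, hFv⟩⟩
  intro w hw
  rcases eq_or_ne w v with rfl | hne
  · rw [hFv]; exact Or.inr hadj.symm
  · rw [hFw w ⟨hw, hne⟩]
    rcases (hft' ⟨w, hw, hne⟩).2 with h | h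
    · exact Or.inl h
    · exact Or.inr h


lemma hallA {S T : Set V} {u v : V}
    (hS : IsVC G S) (hSc : S.ncard = mvc G) (hScon : (G.induce S).Connected)
    (hT : IsVC G T) (hTc : T.ncard = mvc G) (huT : u ∈ T) (huS : u ∉ S) (hv : v ∈ S)
    (hmax : ∀ T' : Set V, IsVC G T' → T'.ncard = mvc G → u ∈ T' →
      (S ∩ T').ncard ≤ (S ∩ T).ncard) :
    ∀ A : Set V, A ⊆ S \ {v} →
      A.ncard ≤ ((A ∪ nbr G A) ∩ (T \ {u})).ncard := by
  intro A hA
  by_contra hlt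
  push_neg at hlt
  set W : Set V := (A ∪ nbr G A) ∩ (T \ {u}) with hWdef
  have hAS : A ⊆ S := fun a ha => (hA ha).1
  set T2 : Set V := (S \ A) ∪ W ∪ {u} with hT2def
  have huT2 : u ∈ T2 := Or.inr rfl
  have hT2vc : IsVC G T2 := by
    have key : ∀ a b : V, G.Adj a b → a ∈ S → a ∈ T2 ∨ b ∈ T2 := by
      intro a b hab haS
      by_cases haA : a ∈ A
      · rcases hT hab with haT | hbT
        · exact Or.inl (Or.inl (Or.inr ⟨Or.inl haA, haT, fun h => huS (h ▸ haS)⟩))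
        · by_cases hbu : b = u
          · exact Or.inr (Or.inr (by simp [hbu]))
          · exact Or.inr (Or.inl (Or.inr ⟨Or.inr ⟨a, haA, hab⟩, hbT, hbu⟩))
      · exact Or.inl (Or.inl (Or.inl ⟨haS, haA⟩))
    intro a b hab
    rcases hS hab with h | h
    · exact key a b hab h
    · exact (key b a hab.symm h).symm
  -- cardinalities
  have hfinS : S.Finite := Set.toFinite S
  have hSA : (S \ A).ncard = S.ncard - A.ncard := Set.ncard_diff hAS
  have hAle : A.ncard ≤ S.ncard := Set.ncard_le_ncard hAS
  have hT2le : T2.ncard ≤ (S \ A).ncard + W.ncard + 1 := by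
    calc T2.ncard ≤ ((S \ A) ∪ W).ncard + ({u} : Set V).ncard := Set.ncard_union_le _ _
    _ ≤ (S \ A).ncard + W.ncard + 1 := by
        have := Set.ncard_union_le (S \ A) W
        simp only [Set.ncard_singleton]
        omega
  have hmvcT2 : mvc G ≤ T2.ncard := mvc_le hT2vc
  have hT2c : T2.ncard = mvc G := by omega
  have hWS : ∀ s ∈ W, s ∈ S → s ∈ A := by
    intro s hsW hsS
    by_contra hsA
    have hsub : T2 ⊆ (S \ A) ∪ (W \ {s}) ∪ {u} := by
      rintro x ((h | h) | h)
      · exact Or.inl (Or.inl h)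
      · by_cases hxs : x = s
        · exact Or.inl (Or.inl ⟨hxs ▸ hsS, hxs ▸ hsA⟩)
        · exact Or.inl (Or.inr ⟨h, hxs⟩)
      · exact Or.inr h
    have h1 : (W \ {s}).ncard = W.ncard - 1 := Set.ncard_diff_singleton_of_mem hsW
    have h2 : T2.ncard ≤ (S \ A).ncard + (W \ {s}).ncard + 1 := by
      calc T2.ncard ≤ (((S \ A) ∪ (W \ {s})) ∪ {u}).ncard := Set.ncard_le_ncard hsub
      _ ≤ ((S \ A) ∪ (W \ {s})).ncard + ({u} : Set V).ncard := Set.ncard_union_le _ _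
      _ ≤ (S \ A).ncard + (W \ {s}).ncard + 1 := by
          have := Set.ncard_union_le (S \ A) (W \ {s})
          simp only [Set.ncard_singleton]
          omega
    have hW1 : 0 < W.ncard := (Set.ncard_pos (Set.toFinite W)).mpr ⟨s, hsW⟩
    omega
  have hm2 : (S ∩ T2).ncard ≤ (S ∩ T).ncard := hmax T2 hT2vc hT2c huT2
  have hsub2 : (S \ A) ∪ (A ∩ W) ⊆ S ∩ T2 := by
    rintro x (h | h)
    · exact ⟨h.1, Or.inl (Or.inl h)⟩
    · exact ⟨hAS h.1, Or.inl (Or.inr h.2)⟩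
  have hdisj : Disjoint (S \ A) (A ∩ W) := by
    rw [Set.disjoint_left]
    rintro x ⟨_, hxA⟩ ⟨hxA', _⟩
    exact hxA hxA'
  have hc2 : (S \ A).ncard + (A ∩ W).ncard ≤ (S ∩ T2).ncard := by
    rw [← Set.ncard_union_eq hdisj]
    exact Set.ncard_le_ncard hsub2
  have hST : (S ∩ T).ncard = S.ncard - (S \ T).ncard := by
    rw [← Set.diff_diff_right_self]
    exact Set.ncard_diff Set.diff_subset
  have hAWsub : A \ W ⊆ S \ T := by
    rintro x ⟨hxA, hxW⟩
    refine ⟨hAS hxA, fun hxT => hxW ?_⟩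
    exact ⟨Or.inl hxA, hxT, fun h => huS (h ▸ hAS hxA)⟩
  have hAWc : (A \ W).ncard = A.ncard - (A ∩ W).ncard := by
    rw [← Set.diff_self_inter]
    exact Set.ncard_diff Set.inter_subset_left
  have hAWle : (A \ W).ncard ≤ (S \ T).ncard := Set.ncard_le_ncard hAWsub
  have hSTle : (S \ T).ncard ≤ S.ncard := Set.ncard_le_ncard Set.diff_subset
  have hAWle2 : (A ∩ W).ncard ≤ A.ncard := Set.ncard_le_ncard Set.inter_subset_left
  have hAWeq : A \ W = S \ T := by
    apply Set.eq_of_subset_of_ncard_le hAWsub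
    omega
  have hclosed : ∀ p ∈ A, ∀ q ∈ S, G.Adj p q → q ∈ A := by
    intro p hp q hq hpq
    by_contra hqA
    by_cases hqT : q ∈ T
    · have hqW : q ∈ W := ⟨Or.inr ⟨p, hp, hpq⟩, hqT, fun h => huS (h ▸ hq)⟩
      exact hqA (hWS q hqW hq)
    · have : q ∈ A \ W := hAWeq ▸ (⟨hq, hqT⟩ : q ∈ S \ T)
      exact hqA this.1
  have hAne : A.Nonempty := Set.nonempty_of_ncard_ne_zero (by omega)
  obtain ⟨a, ha⟩ := hAne
  have hvA : v ∉ A := fun h => (hA h).2 rfl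
  exact no_closed hScon hAS ha hv hvA hclosed


lemma hallB {C : Set V} {x u v : V}
    (hC : IsVC G C) (hCcon : (G.induce C).Connected)
    (hx : x ∉ C) (hu : u ∉ C ∪ {x}) (hv : v ∈ C ∪ {x})
    (hnbr : ∀ z : V, ∃ y, G.Adj z y) :
    ∀ A : Set V, A ⊆ (C ∪ {x}) \ {v} →
      A.ncard ≤ ((A ∪ nbr G A) ∩ ((C ∪ {u}) \ {u})).ncard := by
  have huC : u ∉ C := fun h => hu (Or.inl h)
  have hTu : (C ∪ {u}) \ {u} = C := by
    ext y
    simp only [Set.mem_diff, Set.mem_union, Set.mem_singleton_iff]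
    constructor
    · rintro ⟨h | h, h2⟩
      · exact h
      · exact absurd h h2
    · intro h
      exact ⟨Or.inl h, fun h2 => huC (h2 ▸ h)⟩
  intro A hA
  rw [hTu]
  by_contra hlt
  push_neg at hlt
  set W : Set V := (A ∪ nbr G A) ∩ C with hWdef
  have hvA : v ∉ A := fun h => (hA h).2 rfl
  have hsub1 : A ∩ C ⊆ W := fun a ha => ⟨Or.inl ha.1, ha.2⟩
  by_cases hxA : x ∈ A
  · have hsub2 : A \ {x} ⊆ W := by
      rintro a ⟨haA, hax⟩
      rcases (hA haA).1 with h | h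
      · exact ⟨Or.inl haA, h⟩
      · exact absurd h hax
    have hN : nbr G A ∩ C ⊆ A := by
      by_contra hN
      rw [Set.not_subset] at hN
      obtain ⟨q, hq, hqA⟩ := hN
      have hqW : q ∈ W := ⟨Or.inr hq.1, hq.2⟩
      have hins : insert q (A \ {x}) ⊆ W := Set.insert_subset hqW hsub2
      have h1 : (insert q (A \ {x})).ncard = (A \ {x}).ncard + 1 :=
        Set.ncard_insert_of_notMem (fun h => hqA h.1)
      have h2 : (A \ {x}).ncard = A.ncard - 1 := Set.ncard_diff_singleton_of_mem hxA
      have h3 : (insert q (A \ {x})).ncard ≤ W.ncard := Set.ncard_le_ncard hins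
      have h4 : 0 < A.ncard := (Set.ncard_pos (Set.toFinite A)).mpr ⟨x, hxA⟩
      omega
    by_cases hAC : (A ∩ C).Nonempty
    · have hclosed : ∀ p ∈ A ∩ C, ∀ q ∈ C, G.Adj p q → q ∈ A ∩ C := by
        intro p hp q hq hpq
        exact ⟨hN ⟨⟨p, hp.1, hpq⟩, hq⟩, hq⟩
      have hvx : v ≠ x := fun h => hvA (h ▸ hxA)
      have hvC : v ∈ C := by
        rcases hv with h | h
        · exact h
        · exact absurd h hvx
      have hvAC : v ∉ A ∩ C := fun h => hvA h.1
      obtain ⟨a, ha⟩ := hAC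
      exact no_closed hCcon Set.inter_subset_right ha hvC hvAC hclosed
    · have hAx : A = {x} := by
        refine Set.eq_of_subset_of_ncard_le ?_ ?_ (Set.toFinite _)
        · intro a haA
          rcases (hA haA).1 with h | h
          · exact absurd ⟨haA, h⟩ (fun hh => hAC ⟨a, hh⟩)
          · exact h
        · have h4 : 0 < A.ncard := (Set.ncard_pos (Set.toFinite A)).mpr ⟨x, hxA⟩
          simp only [Set.ncard_singleton]
          omega
      obtain ⟨y, hy⟩ := hnbr x
      have hyC : y ∈ C := by
        rcases hC hy with h | h
        · exact absurd h hx
        · exact h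
      have : y ∈ A := hN ⟨⟨x, hxA, hy⟩, hyC⟩
      rw [hAx] at this
      exact G.irrefl (this ▸ hy)
  · have hsub2 : A ⊆ W := by
      intro a haA
      rcases (hA haA).1 with h | h
      · exact ⟨Or.inl haA, h⟩
      · exact absurd (h ▸ haA) hxA
    exact absurd (Set.ncard_le_ncard hsub2) (by omega)

end Helpers


/-- If `G` is connected and every minimum vertex cover of `G` induces a
connected subgraph, then `evc G = mvc G` when every vertex lies in some minimum vertex
cover, and `evc G = mvc G + 1` otherwise. -/

theorem evc_eq_mvc_or_succ_of_connected_min_covers {V : Type*} [Finite V]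
    (G : SimpleGraph V) (hconn : G.Connected)
    (hcc : ∀ S : Set V, IsVC G S → S.ncard = mvc G → (G.induce S).Connected) :
    ((∀ v : V, ∃ S : Set V, IsVC G S ∧ S.ncard = mvc G ∧ v ∈ S) → evc G = mvc G) ∧
    (¬ (∀ v : V, ∃ S : Set V, IsVC G S ∧ S.ncard = mvc G ∧ v ∈ S) →
      evc G = mvc G + 1) := by
  classical
  obtain ⟨S₀, hS₀vc, hS₀c⟩ := mvc_spec G
  -- mvc is positive
  have hmvc_pos : 0 < mvc G := by
    rcases Nat.eq_zero_or_pos (mvc G) with h | h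
    swap
    · exact h
    · exfalso
      have hS₀e : S₀ = ∅ := by
        rw [← Set.ncard_eq_zero (Set.toFinite S₀)]
        omega
      have hcon := hcc S₀ hS₀vc hS₀c
      rw [hS₀e] at hcon
      obtain ⟨⟨z, hz⟩⟩ := hcon.nonempty
      exact hz
  -- there is an edge
  have hedge : ∃ a b : V, G.Adj a b := by
    by_contra h
    push_neg at h
    have : IsVC G (∅ : Set V) := fun a b hab => absurd hab (h a b)
    have := mvc_le this
    simp [Set.ncard_empty] at this
    omega
  -- every vertex has a neighbor
  have hnbr : ∀ z : V, ∃ y, G.Adj z y := by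
    intro z
    obtain ⟨a, b, hab⟩ := hedge
    obtain ⟨p⟩ := hconn.preconnected z a
    cases p with
    | nil => exact ⟨b, hab⟩
    | cons h q => exact ⟨_, h⟩
  -- lower bound for any evc class
  have evc_ge : ∀ k : ℕ, (∃ Cl : Set (Set V), IsEvcClassOn G ∅ k Cl) → mvc G ≤ k := by
    rintro k ⟨Cl, ⟨S, hS⟩, hprop, _⟩
    rw [← (hprop S hS).2.2]
    exact mvc_le (hprop S hS).1
  constructor
  · -- case A : every vertex in some minimum vertex cover
    intro h_all
    have defendA : ∀ S : Set V, IsVC G S → S.ncard = mvc G → ∀ u v : V, G.Adj u v → u ∉ S →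
        ∃ T : Set V, (IsVC G T ∧ T.ncard = mvc G) ∧ Defends G S T u v := by
      intro S hSv hSc u v hadj huS
      have hv : v ∈ S := (hSv hadj).resolve_left huS
      have h𝒯ne : {T : Set V | (IsVC G T ∧ T.ncard = mvc G) ∧ u ∈ T}.Nonempty := by
        obtain ⟨T, hT1, hT2, hT3⟩ := h_all u
        exact ⟨T, ⟨hT1, hT2⟩, hT3⟩
      obtain ⟨T, hT𝒯, hTmax⟩ := Set.Finite.exists_maximalFor
        (fun T => (S ∩ T).ncard) _ (Set.toFinite _) h𝒯ne
      have hmax : ∀ T' : Set V, IsVC G T' → T'.ncard = mvc G → u ∈ T' →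
          (S ∩ T').ncard ≤ (S ∩ T).ncard := by
        intro T' h1 h2 h3
        rcases le_total ((S ∩ T').ncard) ((S ∩ T).ncard) with h | h
        · exact h
        · exact hTmax ⟨⟨h1, h2⟩, h3⟩ h
      exact ⟨T, hT𝒯.1, hall_defends (hSc.trans hT𝒯.1.2.symm) hv hT𝒯.2 huS hadj
        (hallA hSv hSc (hcc S hSv hSc) hT𝒯.1.1 hT𝒯.1.2 hT𝒯.2 huS hv hmax)⟩
    have hCA : IsEvcClassOn G ∅ (mvc G) {S : Set V | IsVC G S ∧ S.ncard = mvc G} := by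
      refine ⟨⟨S₀, hS₀vc, hS₀c⟩, fun S hS => ⟨hS.1, Set.empty_subset _, hS.2⟩, ?_⟩
      intro S hS u v hadj
      by_cases huS : u ∈ S
      · by_cases hvS : v ∈ S
        · exact ⟨S, hS, defends_swap huS hvS hadj⟩
        · obtain ⟨T, hT, hd⟩ := defendA S hS.1 hS.2 v u hadj.symm hvS
          exact ⟨T, hT, defends_comm hd⟩
      · obtain ⟨T, hT, hd⟩ := defendA S hS.1 hS.2 u v hadj huS
        exact ⟨T, hT, hd⟩
    have h1 : evc G ≤ mvc G := Nat.sInf_le ⟨_, hCA⟩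
    have h2 : mvc G ≤ evc G := le_csInf ⟨_, _, hCA⟩ (fun k hk => evc_ge k hk)
    omega
  · -- case B : some vertex in no minimum vertex cover
    intro h_not
    push_neg at h_not
    obtain ⟨w, hw⟩ := h_not
    have hw' : ∀ S : Set V, IsVC G S → S.ncard = mvc G → w ∉ S := hw
    have hwC : w ∉ S₀ := hw' S₀ hS₀vc hS₀c
    have hCcon : (G.induce S₀).Connected := hcc S₀ hS₀vc hS₀c
    set CB : Set (Set V) := {T | ∃ y, y ∉ S₀ ∧ T = S₀ ∪ {y}} with hCB
    have hcardCB : ∀ y : V, y ∉ S₀ → (S₀ ∪ {y}).ncard = mvc G + 1 := by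
      intro y hy
      rw [Set.union_singleton, Set.ncard_insert_of_notMem hy (Set.toFinite _), hS₀c]
    have hvcCB : ∀ y : V, IsVC G (S₀ ∪ {y}) := by
      intro y a b hab
      rcases hS₀vc hab with h | h
      · exact Or.inl (Or.inl h)
      · exact Or.inr (Or.inl h)
    have defendB : ∀ x : V, x ∉ S₀ → ∀ u v : V, G.Adj u v → u ∉ S₀ ∪ {x} →
        ∃ T ∈ CB, Defends G (S₀ ∪ {x}) T u v := by
      intro x hx u v hadj huS
      have hv : v ∈ S₀ ∪ {x} := (hvcCB x hadj).resolve_left huS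
      have huC : u ∉ S₀ := fun h => huS (Or.inl h)
      refine ⟨S₀ ∪ {u}, ⟨u, huC, rfl⟩, hall_defends ?_ hv (Or.inr rfl) huS hadj
        (hallB hS₀vc hCcon hx huS hv hnbr)⟩
      rw [hcardCB x hx, hcardCB u huC]
    have hCBclass : IsEvcClassOn G ∅ (mvc G + 1) CB := by
      refine ⟨⟨S₀ ∪ {w}, w, hwC, rfl⟩, ?_, ?_⟩
      · rintro S ⟨y, hy, rfl⟩
        exact ⟨hvcCB y, Set.empty_subset _, hcardCB y hy⟩
      · rintro S ⟨x, hx, rfl⟩ u v hadj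
        by_cases huS : u ∈ S₀ ∪ {x}
        · by_cases hvS : v ∈ S₀ ∪ {x}
          · exact ⟨S₀ ∪ {x}, ⟨x, hx, rfl⟩, defends_swap huS hvS hadj⟩
          · obtain ⟨T, hT, hd⟩ := defendB x hx v u hadj.symm hvS
            exact ⟨T, hT, defends_comm hd⟩
        · exact defendB x hx u v hadj huS
    have h1 : evc G ≤ mvc G + 1 := Nat.sInf_le ⟨_, hCBclass⟩
    have h2 : mvc G + 1 ≤ evc G := by
      refine le_csInf ⟨_, _, hCBclass⟩ ?_
      rintro k ⟨Cl, hne, hprop, hdef⟩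
      obtain ⟨S, hS⟩ := hne
      have hk : mvc G ≤ k := by
        rw [← (hprop S hS).2.2]
        exact mvc_le (hprop S hS).1
      rcases lt_or_eq_of_le hk with h | h
      · omega
      · exfalso
        obtain ⟨y, hy⟩ := hnbr w
        obtain ⟨S', hS', f, hbij, hmv, hcross⟩ := hdef S hS w y hy
        have hwS : w ∉ S := hw' S (hprop S hS).1 (by rw [(hprop S hS).2.2, ← h])
        rcases hcross with ⟨h1, _⟩ | ⟨h1, h2⟩
        · exact hwS h1
        · have hwS' : w ∈ S' := h2 ▸ hbij.mapsTo h1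
          exact hw' S' (hprop S' hS').1 (by rw [(hprop S' hS').2.2, ← h]) hwS'
    omega
end

section
/- Let G be a connected graph in which every minimum vertex cover induces a connected subgraph. Then evc(G) equals the minimum k such that for every vertex v of G there exists a vertex cover of G of size k containing v. -/
open EVC SimpleGraph

namespace EVCAux

open EVC SimpleGraph

variable {V : Type*}

/-- closed neighborhood of a set -/
def NA (G : SimpleGraph V) (A : Set V) : Set V := {y | ∃ a ∈ A, a = y ∨ G.Adj a y}

lemma subset_NA (G : SimpleGraph V) (A : Set V) : A ⊆ NA G A :=
  fun a ha => ⟨a, ha, Or.inl rfl⟩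

lemma isVC_univ (G : SimpleGraph V) : IsVC G Set.univ := fun _ _ _ => Or.inl trivial

lemma mvc_set_nonempty (G : SimpleGraph V) :
    {k | ∃ S : Set V, IsVC G S ∧ S.ncard = k}.Nonempty :=
  ⟨_, Set.univ, isVC_univ G, rfl⟩

lemma exists_min_vc (G : SimpleGraph V) : ∃ S : Set V, IsVC G S ∧ S.ncard = mvc G :=
  Nat.sInf_mem (mvc_set_nonempty G)

lemma mvc_le (G : SimpleGraph V) {S : Set V} (hS : IsVC G S) : mvc G ≤ S.ncard :=
  Nat.sInf_le ⟨S, hS, rfl⟩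

/-- the Z-set used in Hall-condition arguments is a vertex cover -/
lemma isVC_Z (G : SimpleGraph V) {S T A : Set V} (hS : IsVC G S) (hT : IsVC G T) :
    IsVC G ((S \ A) ∪ (NA G A ∩ T)) := by
  intro x y hadj
  have hsym : G.Adj y x := hadj.symm
  rcases hS hadj with hx | hy
  · by_cases hxA : x ∈ A
    · by_cases hyT : y ∈ T
      · exact Or.inr (Or.inr ⟨⟨x, hxA, Or.inr hadj⟩, hyT⟩)
      · rcases hT hadj with hxT | hyT'
        · exact Or.inl (Or.inr ⟨⟨x, hxA, Or.inl rfl⟩, hxT⟩)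
        · exact absurd hyT' hyT
    · exact Or.inl (Or.inl ⟨hx, hxA⟩)
  · by_cases hyA : y ∈ A
    · by_cases hxT : x ∈ T
      · exact Or.inl (Or.inr ⟨⟨y, hyA, Or.inr hsym⟩, hxT⟩)
      · rcases hT hadj with hxT' | hyT
        · exact absurd hxT' hxT
        · exact Or.inr (Or.inr ⟨⟨y, hyA, Or.inl rfl⟩, hyT⟩)
    · exact Or.inr (Or.inl ⟨hy, hyA⟩)

/-- boundary edge lemma: a connected induced subgraph has an edge across any
nontrivial partition -/
lemma exists_adj_boundary (G : SimpleGraph V) {S A : Set V}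
    (hconnS : (G.induce S).Connected) (hAS : A ⊆ S) (h1 : A.Nonempty)
    (h2 : (S \ A).Nonempty) : ∃ a ∈ A, ∃ b ∈ S \ A, G.Adj a b := by
  obtain ⟨a, ha⟩ := h1
  obtain ⟨b, hb⟩ := h2
  have hr : (G.induce S).Reachable ⟨a, hAS ha⟩ ⟨b, hb.1⟩ :=
    hconnS.preconnected _ _
  obtain ⟨p⟩ := hr
  suffices H : ∀ (x y : ↥S), (G.induce S).Walk x y → (x : V) ∈ A → (y : V) ∉ A →
      ∃ a ∈ A, ∃ b ∈ S \ A, G.Adj a b by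
    exact H _ _ p ha hb.2
  intro x y p
  induction p with
  | nil => intro hx hy; exact absurd hx hy
  | @cons c d e hadj p ih =>
    intro hx hy
    by_cases hdA : (d : V) ∈ A
    · exact ih hdA hy
    · refine ⟨c, hx, d, ⟨d.2, hdA⟩, ?_⟩
      simpa using hadj

/-- defending when both endpoints are occupied: swap the two guards -/
lemma defends_swap (G : SimpleGraph V) {S : Set V} {u v : V} (hu : u ∈ S) (hv : v ∈ S)
    (hadj : G.Adj u v) : Defends G S S u v := by
  classical
  refine ⟨Equiv.swap u v, ⟨?_, ?_, ?_⟩, ?_, Or.inl ⟨hu, Equiv.swap_apply_left u v⟩⟩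
  · intro w hw
    rcases eq_or_ne w u with rfl | hwu
    · simpa [Equiv.swap_apply_left] using hv
    rcases eq_or_ne w v with rfl | hwv
    · simpa [Equiv.swap_apply_right] using hu
    · simpa [Equiv.swap_apply_of_ne_of_ne hwu hwv] using hw
  · exact (Equiv.injective _).injOn
  · intro w hw
    refine ⟨Equiv.swap u v w, ?_, Equiv.swap_apply_self u v w⟩
    rcases eq_or_ne w u with rfl | hwu
    · simpa [Equiv.swap_apply_left] using hv
    rcases eq_or_ne w v with rfl | hwv
    · simpa [Equiv.swap_apply_right] using hu
    · simpa [Equiv.swap_apply_of_ne_of_ne hwu hwv] using hw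
  · intro w hw
    rcases eq_or_ne w u with rfl | hwu
    · exact Or.inr (by simpa [Equiv.swap_apply_left] using hadj)
    rcases eq_or_ne w v with rfl | hwv
    · exact Or.inr (by simpa [Equiv.swap_apply_right] using hadj.symm)
    · exact Or.inl (Equiv.swap_apply_of_ne_of_ne hwu hwv)

/-- Main bijection lemma: given the (forced) Hall condition, there is a legal
one-step move of the guards from `S` to `T` in which the guard at `v` moves to `u`. -/
lemma exists_move (G : SimpleGraph V) [Finite V] {S T : Set V} {u v : V}
    (hv : v ∈ S) (hu : u ∈ T) (huS : u ∉ S) (hadj : G.Adj v u)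
    (hcard : S.ncard = T.ncard)
    (hall : ∀ A : Set V, A ⊆ S \ {v} → A.ncard ≤ (NA G A ∩ (T \ {u})).ncard) :
    ∃ f : V → V, Set.BijOn f S T ∧ (∀ w ∈ S, f w = w ∨ G.Adj w (f w)) ∧ f v = u := by
  classical
  haveI : Fintype V := Fintype.ofFinite V
  set ι := ↥(S \ {v} : Set V)
  set t : ι → Finset V := fun x =>
    Finset.univ.filter (fun y => ((x : V) = y ∨ G.Adj (x : V) y) ∧ y ∈ T ∧ y ≠ u) with ht
  have hHall : ∀ s : Finset ι, s.card ≤ (s.biUnion t).card := by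
    intro s
    set A : Set V := Subtype.val '' (↑s : Set ι) with hA
    have hAsub : A ⊆ S \ {v} := by
      rintro _ ⟨x, _, rfl⟩; exact x.2
    have h1 : s.card = A.ncard := by
      rw [hA, Set.ncard_image_of_injective _ Subtype.val_injective, Set.ncard_coe_finset]
    have h2 : ((s.biUnion t : Finset V) : Set V) = NA G A ∩ (T \ {u}) := by
      ext y
      simp only [Finset.coe_biUnion, Finset.mem_coe, Finset.mem_biUnion, ht,
        Finset.mem_filter, Finset.mem_univ, true_and, Set.mem_inter_iff, Set.mem_setOf_eq,
        NA, Set.mem_diff, Set.mem_singleton_iff, hA, Set.mem_iUnion, Set.mem_image]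
      constructor
      · rintro ⟨x, hx, hcond, hyT, hyu⟩
        exact ⟨⟨(x : V), ⟨x, hx, rfl⟩, hcond⟩, hyT, hyu⟩
      · rintro ⟨⟨a, ⟨x, hx, rfl⟩, hcond⟩, hyT, hyu⟩
        exact ⟨x, hx, hcond, hyT, hyu⟩
    have h3 : (s.biUnion t).card = (NA G A ∩ (T \ {u})).ncard := by
      rw [← h2, Set.ncard_coe_finset]
    rw [h1, h3]
    exact hall A hAsub
  obtain ⟨g, hginj, hgmem⟩ := (Finset.all_card_le_biUnion_card_iff_exists_injective t).mp hHall
  have hgmem' : ∀ x : ι, ((x : V) = g x ∨ G.Adj (x : V) (g x)) ∧ g x ∈ T ∧ g x ≠ u := by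
    intro x
    have := hgmem x
    simpa [ht, Finset.mem_filter] using this
  set f : V → V := fun x => if h : x ∈ (S \ {v} : Set V) then g ⟨x, h⟩
    else if x = v then u else x with hf
  have hfx : ∀ (x : V) (h : x ∈ (S \ {v} : Set V)), f x = g ⟨x, h⟩ :=
    fun x h => dif_pos h
  have hfv : f v = u := by simp [hf]
  have hmaps : Set.MapsTo f S T := by
    intro x hx
    rcases eq_or_ne x v with rfl | hxv
    · rw [hfv]; exact hu
    · rw [hfx x ⟨hx, hxv⟩]; exact (hgmem' _).2.1
  have hinj : Set.InjOn f S := by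
    intro x hx y hy hxy
    by_cases hxv : x = v <;> by_cases hyv : y = v
    · rw [hxv, hyv]
    · rw [hxv, hfv, hfx y ⟨hy, hyv⟩] at hxy
      exact absurd hxy.symm (hgmem' ⟨y, hy, hyv⟩).2.2
    · rw [hyv, hfv, hfx x ⟨hx, hxv⟩] at hxy
      exact absurd hxy (hgmem' ⟨x, hx, hxv⟩).2.2
    · rw [hfx x ⟨hx, hxv⟩, hfx y ⟨hy, hyv⟩] at hxy
      have h2 := hginj hxy
      exact congrArg Subtype.val h2
  have hsurj : Set.SurjOn f S T := by
    have himg : f '' S ⊆ T := hmaps.image_subset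
    have hcard2 : (f '' S).ncard = T.ncard := by
      rw [Set.ncard_image_of_injOn hinj, hcard]
    have : f '' S = T := Set.eq_of_subset_of_ncard_le himg (le_of_eq hcard2.symm) (Set.toFinite T)
    exact fun y hy => this ▸ hy
  refine ⟨f, ⟨hmaps, hinj, hsurj⟩, ?_, hfv⟩
  intro w hw
  rcases eq_or_ne w v with rfl | hwv
  · rw [hfv]; exact Or.inr hadj
  · rcases (hgmem' ⟨w, hw, hwv⟩).1 with h | h
    · exact Or.inl ((hfx w ⟨hw, hwv⟩).trans h.symm)
    · rw [hfx w ⟨hw, hwv⟩]; exact Or.inr h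

/-- Hall condition for moving between minimum vertex covers, with the forced move `v → u`,
when `T` is chosen among minimum vertex covers containing `u` to minimize `(S \ T).ncard`. -/
lemma hall_min [Finite V] (G : SimpleGraph V)
    (hcc : ∀ S : Set V, IsVC G S → S.ncard = mvc G → (G.induce S).Connected)
    {S T : Set V} {u v : V}
    (hS : IsVC G S) (hSm : S.ncard = mvc G)
    (hT : IsVC G T) (hTm : T.ncard = mvc G)
    (huT : u ∈ T) (huS : u ∉ S) (hvS : v ∈ S)
    (hmin : ∀ T' : Set V, IsVC G T' → T'.ncard = mvc G → u ∈ T' →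
      (S \ T).ncard ≤ (S \ T').ncard)
    (A : Set V) (hA : A ⊆ S \ {v}) :
    A.ncard ≤ (NA G A ∩ (T \ {u})).ncard := by
  set B := NA G A ∩ T with hB
  have hBu : NA G A ∩ (T \ {u}) = B \ {u} := by
    ext y
    simp only [hB, Set.mem_inter_iff, Set.mem_diff, Set.mem_singleton_iff]
    tauto
  have hAS : A ⊆ S := fun x hx => (hA hx).1
  have hAcard : A.ncard ≤ S.ncard := Set.ncard_le_ncard hAS (Set.toFinite S)
  have hZ : IsVC G ((S \ A) ∪ B) := isVC_Z G hS hT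
  have hZm : mvc G ≤ ((S \ A) ∪ B).ncard := mvc_le G hZ
  have hZle : ((S \ A) ∪ B).ncard ≤ (S \ A).ncard + B.ncard := Set.ncard_union_le _ _
  have hdiff : (S \ A).ncard = S.ncard - A.ncard := Set.ncard_diff hAS (Set.toFinite A)
  have hstep2 : A.ncard ≤ B.ncard := by omega
  rw [hBu]
  by_contra hcon
  push_neg at hcon
  have huB : u ∈ B := by
    by_contra h
    rw [Set.diff_singleton_eq_self h] at hcon; omega
  have hBA : B.ncard ≤ A.ncard := by
    have h1 : B ⊆ insert u (B \ {u}) := by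
      intro y hy
      rcases eq_or_ne y u with rfl | hyu
      · exact Set.mem_insert _ _
      · exact Set.mem_insert_of_mem _ ⟨hy, hyu⟩
    have h2 := Set.ncard_le_ncard h1 (Set.toFinite _)
    have h3 := Set.ncard_insert_le u (B \ {u})
    omega
  have hZcard : ((S \ A) ∪ B).ncard = mvc G := le_antisymm (by omega) hZm
  have hSZ : S \ ((S \ A) ∪ B) = A \ T := by
    ext x
    constructor
    · rintro ⟨hxS, hnot⟩
      have hxA : x ∈ A := by
        by_contra hxA; exact hnot (Or.inl ⟨hxS, hxA⟩)
      exact ⟨hxA, fun hxT => hnot (Or.inr ⟨subset_NA G A hxA, hxT⟩)⟩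
    · rintro ⟨hxA, hxT⟩
      refine ⟨hAS hxA, ?_⟩
      rintro (h | h)
      · exact h.2 hxA
      · exact hxT h.2
  have hST2 : A \ T = S \ T := by
    refine Set.eq_of_subset_of_ncard_le (fun x hx => ⟨hAS hx.1, hx.2⟩) ?_ (Set.toFinite _)
    rw [← hSZ]
    exact hmin _ hZ hZcard (Or.inr huB)
  have hSAT : S \ A ⊆ T := by
    intro x hx
    by_contra hxT
    have h1 : x ∈ S \ T := ⟨hx.1, hxT⟩
    rw [← hST2] at h1
    exact hx.2 h1.1
  have hAne : A.Nonempty := by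
    obtain ⟨a, haA, -⟩ := huB.1
    exact ⟨a, haA⟩
  have hSAne : (S \ A).Nonempty := ⟨v, hvS, fun hvA => (hA hvA).2 rfl⟩
  obtain ⟨a, haA, b, hbSA, hab⟩ :=
    exists_adj_boundary G (hcc S hS hSm) hAS hAne hSAne
  have hbB : b ∈ B := ⟨⟨a, haA, Or.inr hab⟩, hSAT hbSA⟩
  have hZeq : (S \ A) ∪ B = (S \ A) ∪ (B \ {b}) := by
    ext y
    constructor
    · rintro (h | h)
      · exact Or.inl h
      · rcases eq_or_ne y b with rfl | hyb
        · exact Or.inl hbSA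
        · exact Or.inr ⟨h, hyb⟩
    · rintro (h | h)
      · exact Or.inl h
      · exact Or.inr h.1
  have h1 : ((S \ A) ∪ (B \ {b})).ncard ≤ (S \ A).ncard + (B \ {b}).ncard :=
    Set.ncard_union_le _ _
  have h2 : (B \ {b}).ncard = B.ncard - 1 :=
    Set.ncard_diff_singleton_of_mem hbB
  have h3 : 0 < A.ncard := (Set.ncard_pos (Set.toFinite A)).mpr hAne
  rw [hZeq] at hZm
  omega

/-- Hall condition for the `mvc + 1` case. -/
lemma hall_plus [Finite V] (G : SimpleGraph V)
    (hcc : ∀ S : Set V, IsVC G S → S.ncard = mvc G → (G.induce S).Connected)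
    {S T₀ : Set V} {v : V}
    (hT₀ : IsVC G T₀) (hT₀m : T₀.ncard = mvc G) (hsub : T₀ ⊆ S)
    (hSm : S.ncard = mvc G + 1) (hvS : v ∈ S)
    (hnbr : ∀ x : V, ∃ y, G.Adj x y)
    (A : Set V) (hA : A ⊆ S \ {v}) :
    A.ncard ≤ (NA G A ∩ T₀).ncard := by
  have hAS : A ⊆ S := fun x hx => (hA hx).1
  by_cases hAT : A ⊆ T₀
  · exact Set.ncard_le_ncard (fun x hx => ⟨subset_NA G A hx, hAT hx⟩) (Set.toFinite _)
  · obtain ⟨w, hwA, hwT⟩ := Set.not_subset.mp hAT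
    have hwS' : S \ T₀ = {w} := by
      have h1 : (S \ T₀).ncard = 1 := by
        rw [Set.ncard_diff hsub (Set.toFinite T₀)]
        omega
      obtain ⟨z, hz⟩ := Set.ncard_eq_one.mp h1
      have hwz : w = z := by
        have : w ∈ S \ T₀ := ⟨hAS hwA, hwT⟩
        rw [hz] at this
        exact this
      rw [hz, hwz]
    have hA' : A \ {w} ⊆ T₀ := by
      intro x hx
      by_contra hxT
      have h1 : x ∈ S \ T₀ := ⟨hAS hx.1, hxT⟩
      rw [hwS'] at h1
      exact hx.2 h1
    have hvw : v ≠ w := fun h => (hA hwA).2 (by rw [h]; exact rfl)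
    have hvT : v ∈ T₀ := by
      by_contra h
      have h1 : v ∈ S \ T₀ := ⟨hvS, h⟩
      rw [hwS'] at h1
      exact hvw h1
    have hwTnbr : ∀ y, G.Adj w y → y ∈ T₀ := fun y hy => (hT₀ hy).resolve_left hwT
    have hc : ∃ c, c ∈ NA G A ∧ c ∈ T₀ ∧ c ∉ A := by
      by_cases hN : ∃ t, G.Adj w t ∧ t ∉ A
      · obtain ⟨t, hwt, htA⟩ := hN
        exact ⟨t, ⟨w, hwA, Or.inr hwt⟩, hwTnbr t hwt, htA⟩
      · push_neg at hN
        have hA'ne : (A \ {w}).Nonempty := by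
          obtain ⟨t, hwt⟩ := hnbr w
          have htT : t ∈ T₀ := hwTnbr t hwt
          have htw : t ≠ w := fun h => hwT (h ▸ htT)
          exact ⟨t, hN t hwt, htw⟩
        have hT₀A : (T₀ \ (A \ {w})).Nonempty :=
          ⟨v, hvT, fun h => (hA h.1).2 rfl⟩
        obtain ⟨a, haA, b, hbTA, hab⟩ :=
          exists_adj_boundary G (hcc T₀ hT₀ hT₀m) (fun x hx => hA' hx) hA'ne hT₀A
        refine ⟨b, ⟨a, haA.1, Or.inr hab⟩, hbTA.1, ?_⟩
        intro hbA
        exact hbTA.2 ⟨hbA, fun h => hwT (h ▸ hbTA.1)⟩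
    obtain ⟨c, hcNA, hcT, hcA⟩ := hc
    have hsub2 : insert c (A \ {w}) ⊆ NA G A ∩ T₀ := by
      intro x hx
      rcases Set.mem_insert_iff.mp hx with rfl | hx'
      · exact ⟨hcNA, hcT⟩
      · exact ⟨subset_NA G A hx'.1, hA' hx'⟩
    have hcard1 : (insert c (A \ {w})).ncard = (A \ {w}).ncard + 1 :=
      Set.ncard_insert_of_notMem (fun h => hcA h.1) (Set.toFinite _)
    have hcard2 : (A \ {w}).ncard = A.ncard - 1 :=
      Set.ncard_diff_singleton_of_mem hwA
    have h3 : 0 < A.ncard := (Set.ncard_pos (Set.toFinite A)).mpr ⟨w, hwA⟩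
    have h4 := Set.ncard_le_ncard hsub2 (Set.toFinite _)
    omega

lemma insert_vc (G : SimpleGraph V) {S : Set V} (hS : IsVC G S) (x : V) :
    IsVC G (insert x S) := fun _ _ h =>
  (hS h).imp (Set.mem_insert_of_mem x) (Set.mem_insert_of_mem x)

/-- defense in the minimum-cover class when the attack comes from outside -/
lemma defend_out_min [Finite V] (G : SimpleGraph V)
    (hcc : ∀ S : Set V, IsVC G S → S.ncard = mvc G → (G.induce S).Connected)
    {S : Set V} {a b : V}
    (hS : IsVC G S) (hSm : S.ncard = mvc G) (haS : a ∈ S) (hbS : b ∉ S)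
    (hadj : G.Adj a b) (hex : ∃ T : Set V, IsVC G T ∧ T.ncard = mvc G ∧ b ∈ T) :
    ∃ S', (IsVC G S' ∧ S'.ncard = mvc G) ∧
      ∃ f : V → V, Set.BijOn f S S' ∧ (∀ w ∈ S, f w = w ∨ G.Adj w (f w)) ∧ f a = b := by
  set P := {n | ∃ T : Set V, (IsVC G T ∧ T.ncard = mvc G ∧ b ∈ T) ∧ (S \ T).ncard = n} with hP
  have hPne : P.Nonempty := by
    obtain ⟨T, h⟩ := hex
    exact ⟨(S \ T).ncard, T, h, rfl⟩
  obtain ⟨T, ⟨hT, hTm, hbT⟩, hTeq⟩ := Nat.sInf_mem hPne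
  have hmin : ∀ T' : Set V, IsVC G T' → T'.ncard = mvc G → b ∈ T' →
      (S \ T).ncard ≤ (S \ T').ncard := by
    intro T' h1 h2 h3
    rw [hTeq]
    exact Nat.sInf_le ⟨T', ⟨h1, h2, h3⟩, rfl⟩
  obtain ⟨f, hbij, hmv, hfa⟩ := exists_move G haS hbT hbS hadj (by rw [hSm, hTm])
    (hall_min G hcc hS hSm hT hTm hbT hbS haS hmin)
  exact ⟨T, ⟨hT, hTm⟩, f, hbij, hmv, hfa⟩

/-- defense in the `mvc+1` class when the attack comes from outside -/
lemma defend_out_plus [Finite V] (G : SimpleGraph V)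
    (hcc : ∀ S : Set V, IsVC G S → S.ncard = mvc G → (G.induce S).Connected)
    {S T₀ : Set V} {a b : V}
    (hS : IsVC G S) (hSm : S.ncard = mvc G + 1)
    (hT₀ : IsVC G T₀) (hT₀m : T₀.ncard = mvc G) (hsub : T₀ ⊆ S)
    (haS : a ∈ S) (hbS : b ∉ S) (hadj : G.Adj a b)
    (hnbr : ∀ x : V, ∃ y, G.Adj x y) :
    ∃ S', (IsVC G S' ∧ S'.ncard = mvc G + 1 ∧
        ∃ T : Set V, IsVC G T ∧ T.ncard = mvc G ∧ T ⊆ S') ∧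
      ∃ f : V → V, Set.BijOn f S S' ∧ (∀ w ∈ S, f w = w ∨ G.Adj w (f w)) ∧ f a = b := by
  have hbT₀ : b ∉ T₀ := fun h => hbS (hsub h)
  have hTVC : IsVC G (insert b T₀) := insert_vc G hT₀ b
  have hTcard : (insert b T₀).ncard = mvc G + 1 := by
    rw [Set.ncard_insert_of_notMem hbT₀ (Set.toFinite _), hT₀m]
  have hall : ∀ A : Set V, A ⊆ S \ {a} →
      A.ncard ≤ (NA G A ∩ ((insert b T₀ : Set V) \ {b})).ncard := by
    intro A hA
    rw [Set.insert_diff_self_of_notMem hbT₀]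
    exact hall_plus G hcc hT₀ hT₀m hsub hSm haS hnbr A hA
  obtain ⟨f, hbij, hmv, hfa⟩ := exists_move G haS (Set.mem_insert b T₀) hbS hadj
    (by rw [hSm, hTcard]) hall
  exact ⟨insert b T₀, ⟨hTVC, hTcard, T₀, hT₀, hT₀m, Set.subset_insert _ _⟩, f, hbij, hmv, hfa⟩

/-- the class of all minimum vertex covers, when each vertex is in one of them -/
lemma evc_class_min [Finite V] (G : SimpleGraph V)
    (hcc : ∀ S : Set V, IsVC G S → S.ncard = mvc G → (G.induce S).Connected)
    (hev : ∀ x : V, ∃ S : Set V, IsVC G S ∧ S.ncard = mvc G ∧ x ∈ S) :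
    IsEvcClassOn G ∅ (mvc G) {S : Set V | IsVC G S ∧ S.ncard = mvc G} := by
  refine ⟨?_, fun S hS => ⟨hS.1, Set.empty_subset _, hS.2⟩, ?_⟩
  · obtain ⟨S, h1, h2⟩ := exists_min_vc G
    exact ⟨S, h1, h2⟩
  rintro S ⟨hS, hSm⟩ u v hadj
  by_cases huS : u ∈ S <;> by_cases hvS : v ∈ S
  · exact ⟨S, ⟨hS, hSm⟩, defends_swap G huS hvS hadj⟩
  · obtain ⟨S', hS', f, h1, h2, h3⟩ := defend_out_min G hcc hS hSm huS hvS hadj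
      (by obtain ⟨T, hT1, hT2, hT3⟩ := hev v; exact ⟨T, hT1, hT2, hT3⟩)
    exact ⟨S', hS', f, h1, h2, Or.inl ⟨huS, h3⟩⟩
  · obtain ⟨S', hS', f, h1, h2, h3⟩ := defend_out_min G hcc hS hSm hvS huS hadj.symm
      (by obtain ⟨T, hT1, hT2, hT3⟩ := hev u; exact ⟨T, hT1, hT2, hT3⟩)
    exact ⟨S', hS', f, h1, h2, Or.inr ⟨hvS, h3⟩⟩
  · rcases hS hadj with h | h
    · exact absurd h huS
    · exact absurd h hvS

/-- the class of vertex covers of size `mvc + 1` containing a minimum vertex cover -/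
lemma evc_class_plus [Finite V] (G : SimpleGraph V)
    (hcc : ∀ S : Set V, IsVC G S → S.ncard = mvc G → (G.induce S).Connected)
    (hnbr : ∀ x : V, ∃ y, G.Adj x y)
    (hne : ∃ S : Set V, IsVC G S ∧ S.ncard = mvc G + 1 ∧
      ∃ T : Set V, IsVC G T ∧ T.ncard = mvc G ∧ T ⊆ S) :
    IsEvcClassOn G ∅ (mvc G + 1) {S : Set V | IsVC G S ∧ S.ncard = mvc G + 1 ∧
      ∃ T : Set V, IsVC G T ∧ T.ncard = mvc G ∧ T ⊆ S} := by
  refine ⟨hne, fun S hS => ⟨hS.1, Set.empty_subset _, hS.2.1⟩, ?_⟩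
  rintro S ⟨hS, hSm, T₀, hT₀, hT₀m, hsub⟩ u v hadj
  by_cases huS : u ∈ S <;> by_cases hvS : v ∈ S
  · exact ⟨S, ⟨hS, hSm, T₀, hT₀, hT₀m, hsub⟩, defends_swap G huS hvS hadj⟩
  · obtain ⟨S', hS', f, h1, h2, h3⟩ :=
      defend_out_plus G hcc hS hSm hT₀ hT₀m hsub huS hvS hadj hnbr
    exact ⟨S', hS', f, h1, h2, Or.inl ⟨huS, h3⟩⟩
  · obtain ⟨S', hS', f, h1, h2, h3⟩ :=
      defend_out_plus G hcc hS hSm hT₀ hT₀m hsub hvS huS hadj.symm hnbr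
    exact ⟨S', hS', f, h1, h2, Or.inr ⟨hvS, h3⟩⟩
  · rcases hS hadj with h | h
    · exact absurd h huS
    · exact absurd h hvS

/-- any eternal vertex cover class yields, for each vertex, a cover of size `k` containing it -/
lemma class_to_covers [Finite V] (G : SimpleGraph V)
    (hnbr : ∀ x : V, ∃ y, G.Adj x y) {k : ℕ} {C : Set (Set V)}
    (h : IsEvcClassOn G ∅ k C) :
    ∀ x : V, ∃ S : Set V, IsVC G S ∧ S.ncard = k ∧ x ∈ S := by
  obtain ⟨⟨S₀, hS₀⟩, hprops, hdef⟩ := h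
  intro x
  by_cases hx : x ∈ S₀
  · obtain ⟨h1, -, h3⟩ := hprops S₀ hS₀
    exact ⟨S₀, h1, h3, hx⟩
  · obtain ⟨y, hxy⟩ := hnbr x
    obtain ⟨S', hS', f, hbij, -, hcross⟩ := hdef S₀ hS₀ x y hxy
    rcases hcross with ⟨hxS, -⟩ | ⟨hyS, hfy⟩
    · exact absurd hxS hx
    · obtain ⟨h1, -, h3⟩ := hprops S' hS'
      exact ⟨S', h1, h3, hfy ▸ hbij.mapsTo hyS⟩

theorem main {V : Type*} [Finite V]
    (G : SimpleGraph V) (hconn : G.Connected)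
    (hcc : ∀ S : Set V, IsVC G S → S.ncard = mvc G → (G.induce S).Connected) :
    evc G = sInf {k | ∀ v : V, ∃ S : Set V, IsVC G S ∧ S.ncard = k ∧ v ∈ S} := by
  classical
  have hVne : Nonempty V := hconn.nonempty
  -- G has an edge
  have hmpos : ∃ a b : V, G.Adj a b := by
    by_contra h
    push_neg at h
    have hvc : IsVC G (∅ : Set V) := fun a b hab => absurd hab (h a b)
    have h0 : mvc G = 0 := le_antisymm (by simpa using mvc_le G hvc) (Nat.zero_le _)
    have hconn0 := hcc ∅ hvc (by simp [h0])
    obtain ⟨⟨x, hx⟩⟩ := hconn0.nonempty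
    exact hx
  -- every vertex has a neighbor
  have hnbr : ∀ x : V, ∃ y, G.Adj x y := by
    intro x
    obtain ⟨a, b, hab⟩ := hmpos
    by_cases hxa : x = a
    · exact ⟨b, hxa ▸ hab⟩
    · obtain ⟨p⟩ := hconn.preconnected x a
      cases p with
      | nil => exact absurd rfl hxa
      | cons h _ => exact ⟨_, h⟩
  obtain ⟨T₀, hT₀, hT₀m⟩ := exists_min_vc G
  -- T₀ is not everything
  have hT₀univ : T₀ ≠ Set.univ := by
    intro h
    obtain ⟨a, b, hab⟩ := hmpos
    have hvc : IsVC G (Set.univ \ {a}) := by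
      intro x y hxy
      by_cases hx : x = a
      · exact Or.inr ⟨trivial, by rw [hx] at hxy; exact (hxy.ne).symm⟩
      · exact Or.inl ⟨trivial, hx⟩
    have h1 := mvc_le G hvc
    rw [Set.ncard_diff (Set.subset_univ _) (Set.toFinite _), Set.ncard_singleton] at h1
    have h2 : 0 < (Set.univ : Set V).ncard :=
      (Set.ncard_pos (Set.toFinite _)).mpr ⟨a, trivial⟩
    rw [h] at hT₀m
    omega
  obtain ⟨z, hz⟩ := (Set.ne_univ_iff_exists_notMem _).mp hT₀univ
  set Aset := {k | ∀ v : V, ∃ S : Set V, IsVC G S ∧ S.ncard = k ∧ v ∈ S} with hAset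
  have hA1 : (mvc G + 1) ∈ Aset := by
    intro x
    by_cases hx : x ∈ T₀
    · exact ⟨insert z T₀, insert_vc G hT₀ z,
        by rw [Set.ncard_insert_of_notMem hz (Set.toFinite _), hT₀m],
        Set.mem_insert_of_mem _ hx⟩
    · exact ⟨insert x T₀, insert_vc G hT₀ x,
        by rw [Set.ncard_insert_of_notMem hx (Set.toFinite _), hT₀m],
        Set.mem_insert _ _⟩
  have hAne : Aset.Nonempty := ⟨_, hA1⟩
  have hr : sInf Aset ∈ Aset := Nat.sInf_mem hAne
  have hrlb : mvc G ≤ sInf Aset := by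
    obtain ⟨S, h1, h2, -⟩ := hr (Classical.arbitrary V)
    rw [← h2]
    exact mvc_le G h1
  have hrub : sInf Aset ≤ mvc G + 1 := Nat.sInf_le hA1
  have hE : ∃ C : Set (Set V), IsEvcClassOn G ∅ (sInf Aset) C := by
    rcases (show sInf Aset = mvc G ∨ sInf Aset = mvc G + 1 by omega) with h | h
    · rw [h]
      exact ⟨_, evc_class_min G hcc (h ▸ hr)⟩
    · rw [h]
      refine ⟨_, evc_class_plus G hcc hnbr ?_⟩
      exact ⟨insert z T₀, insert_vc G hT₀ z,
        by rw [Set.ncard_insert_of_notMem hz (Set.toFinite _), hT₀m],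
        T₀, hT₀, hT₀m, Set.subset_insert _ _⟩
  have hle : evc G ≤ sInf Aset := Nat.sInf_le hE
  have hge : sInf Aset ≤ evc G := by
    refine le_csInf ⟨_, hE⟩ ?_
    intro k hk
    obtain ⟨C, hC⟩ := hk
    exact Nat.sInf_le (class_to_covers G hnbr hC)
  exact le_antisymm hle hge

end EVCAux


/-- If `G` is connected and every minimum vertex cover induces a connected
subgraph, then `evc G` is the least `k` such that every vertex lies in some vertex cover
of size `k`. -/
theorem evc_eq_sInf_of_connected_min_covers {V : Type*} [Finite V]
    (G : SimpleGraph V) (hconn : G.Connected)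
    (hcc : ∀ S : Set V, IsVC G S → S.ncard = mvc G → (G.induce S).Connected) :
    evc G = sInf {k | ∀ v : V, ∃ S : Set V, IsVC G S ∧ S.ncard = k ∧ v ∈ S} :=
  EVCAux.main G hconn hcc
end
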